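/- Let p be a prime, k ≥ 2, N a nonzero integer, ρ ∈ ℚ_p with ρ^{2N} ∉ {−1,0,1} and |ρ|_p = 1, set θ = ρ^{2N}, and let h ∈ ℚ_p be a fixed point of f_θ with h ≠ −1 and ρ^{−N}h + ρ^N ≠ 0. For n ≥ 1 and σ : V_n → Φ define m_n(σ) = ρ^{H_n(σ)} h^{c(σ)} / ((ρ^{−N}h + ρ^N)^{k(k^n−1)/(k−1)} (h + 1)), where c(σ) = card{x ∈ W_n : σ(x) = 1} and H_n(σ) = Σ_{⟨x,y⟩ ∈ L_n} N·σ(x)σ(y). Then the set {|m_n(σ)|_p : n ≥ 1, σ : V_n → Φ} is unbounded if and only if 0 < |h + ρ^{2N}|_p < 1. -/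

import Mathlib

open scoped BigOperators

/-- The vertices of `V_n` of the Cayley tree of order `k`: words of length `≤ n` over
`{1,…,k}` (a word of length `m` is encoded as `Fin m → Fin k`; the root is the empty word). -/
abbrev CayleyVertexLE (k n : ℕ) := Σ m : Fin (n + 1), Fin (m : ℕ) → Fin k

/-- Spin values: configurations take values in `Φ = {-1, 1} ⊆ ℤ`, encoded by `Bool`. -/
def spinValue (b : Bool) : ℤ := if b then 1 else -1

/-- The Ising Hamiltonian `H_n(σ) = Σ_{⟨x,y⟩ ∈ L_n} N·σ(x)σ(y)`: the sum runs over all edges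
`⟨x, x·i⟩` with both endpoints in `V_n`. -/
def isingHam (k : ℕ) (N : ℤ) (n : ℕ) (σ : CayleyVertexLE k n → Bool) : ℤ :=
  ∑ m : Fin n, ∑ f : Fin ((m : ℕ) + 1) → Fin k,
    N * spinValue (σ ⟨⟨(m : ℕ), Nat.lt_succ_of_lt m.2⟩, fun i => f i.castSucc⟩) *
      spinValue (σ ⟨⟨(m : ℕ) + 1, Nat.succ_lt_succ m.2⟩, f⟩)

/-- `c(σ) = card{x ∈ W_n : σ(x) = 1}`. -/
def bdryPlusCount (k n : ℕ) (σ : CayleyVertexLE k n → Bool) : ℕ :=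
  (Finset.univ.filter fun f : Fin n → Fin k =>
    σ ⟨⟨n, Nat.lt_succ_self n⟩, f⟩ = true).card

/-- The cylinder value
`m_n(σ) = ρ^{H_n(σ)} h^{c(σ)} / ((ρ^{-N}h + ρ^N)^{k(k^n-1)/(k-1)} (h + 1))` of the
translation-invariant generalized `p`-adic Gibbs measure `μ_h` of the Ising model. -/
noncomputable def cylinderValue (p k : ℕ) [Fact p.Prime] (N : ℤ) (ρ h : ℚ_[p]) (n : ℕ)
    (σ : CayleyVertexLE k n → Bool) : ℚ_[p] :=
  ρ ^ isingHam k N n σ * h ^ bdryPlusCount k n σ /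
    ((ρ ^ (-N) * h + ρ ^ N) ^ (k * (k ^ n - 1) / (k - 1)) * (h + 1))

/-- if `|ρ|_p = 1`, then the translation-invariant generalized `p`-adic Gibbs
measure `μ_h` of the Ising model associated to a fixed point `h ≠ -1` of `f_θ`, `θ = ρ^{2N}`,
is unbounded if and only if `0 < |h + ρ^{2N}|_p < 1`. -/
theorem ising_measure_unbounded_iff
    (p : ℕ) [Fact p.Prime] (k : ℕ) (hk : 2 ≤ k) (N : ℤ) (hN : N ≠ 0)
    (ρ : ℚ_[p]) (hρ : ρ ^ (2 * N) ≠ -1 ∧ ρ ^ (2 * N) ≠ 0 ∧ ρ ^ (2 * N) ≠ 1)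
    (hρnorm : ‖ρ‖ = 1)
    (h : ℚ_[p]) (hfix : h ≠ -(ρ ^ (2 * N)) ∧
      ((ρ ^ (2 * N) * h + 1) / (h + ρ ^ (2 * N))) ^ k = h)
    (hne : h ≠ -1) (hdenom : ρ ^ (-N) * h + ρ ^ N ≠ 0) :
    (∀ M : ℝ, ∃ n : ℕ, 1 ≤ n ∧ ∃ σ : CayleyVertexLE k n → Bool,
        M < ‖cylinderValue p k N ρ h n σ‖) ↔
      (0 < ‖h + ρ ^ (2 * N)‖ ∧ ‖h + ρ ^ (2 * N)‖ < 1) := by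
  obtain ⟨hhθ, hfp⟩ := hfix
  have hρ0 : ρ ≠ 0 := by
    intro hc; rw [hc] at hρnorm; simp at hρnorm
  have hθnorm : ‖ρ ^ (2 * N)‖ = 1 := by rw [norm_zpow, hρnorm, one_zpow]
  have hsum0 : h + ρ ^ (2 * N) ≠ 0 := by
    intro hc; exact hhθ (eq_neg_of_add_eq_zero_left hc)
  set r : ℝ := ‖h + ρ ^ (2 * N)‖ with hr
  have hr0 : 0 < r := norm_pos_iff.mpr hsum0
  have hc0 : (0 : ℝ) < ‖h + 1‖ :=
    norm_pos_iff.mpr (fun hc => hne (eq_neg_of_add_eq_zero_left hc))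
  -- ‖h‖ ≤ 1 from the fixed point equation
  have hh1 : ‖h‖ ≤ 1 := by
    by_contra hlt
    push_neg at hlt
    have e1 : ‖ρ ^ (2 * N) * h + 1‖ = ‖h‖ := by
      rw [Padic.add_eq_max_of_ne (by
        rw [norm_mul, hθnorm, one_mul, norm_one]; exact ne_of_gt hlt)]
      rw [norm_mul, hθnorm, one_mul, norm_one, max_eq_left hlt.le]
    have e2 : ‖h + ρ ^ (2 * N)‖ = ‖h‖ := by
      rw [Padic.add_eq_max_of_ne (by rw [hθnorm]; exact ne_of_gt hlt)]
      rw [hθnorm, max_eq_left hlt.le]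
    have hnh := congrArg (fun x : ℚ_[p] => ‖x‖) hfp
    simp only [norm_pow, norm_div, e1, e2] at hnh
    rw [div_self (by positivity), one_pow] at hnh
    exact absurd hnh.symm (ne_of_gt hlt)
  have hD : ρ ^ (-N) * h + ρ ^ N = ρ ^ (-N) * (h + ρ ^ (2 * N)) := by
    have hexp : (-N) + 2 * N = N := by ring
    rw [mul_add, ← zpow_add₀ hρ0, hexp]
  have hnormD : ‖ρ ^ (-N) * h + ρ ^ N‖ = r := by
    rw [hD, norm_mul, norm_zpow, hρnorm, one_zpow, one_mul]
  have hnorm : ∀ n (σ : CayleyVertexLE k n → Bool),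
      ‖cylinderValue p k N ρ h n σ‖ =
        ‖h‖ ^ bdryPlusCount k n σ / (r ^ (k * (k ^ n - 1) / (k - 1)) * ‖h + 1‖) := by
    intro n σ
    rw [cylinderValue, norm_div, norm_mul, norm_zpow, hρnorm, one_zpow, one_mul,
      norm_pow, norm_mul, norm_pow, hnormD]
  constructor
  · intro H
    refine ⟨hr0, ?_⟩
    by_contra hge
    push_neg at hge
    obtain ⟨n, -, σ, hM⟩ := H (1 / ‖h + 1‖)
    rw [hnorm] at hM
    have h1 : ‖h‖ ^ bdryPlusCount k n σ ≤ 1 := pow_le_one₀ (norm_nonneg _) hh1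
    have h2 : (1 : ℝ) ≤ r ^ (k * (k ^ n - 1) / (k - 1)) := one_le_pow₀ hge
    have hle : ‖h‖ ^ bdryPlusCount k n σ /
        (r ^ (k * (k ^ n - 1) / (k - 1)) * ‖h + 1‖) ≤ 1 / ‖h + 1‖ :=
      div_le_div₀ zero_le_one h1 hc0 (le_mul_of_one_le_left hc0.le h2)
    linarith
  · rintro ⟨-, hrlt⟩
    intro M
    set M' : ℝ := max M 1 with hM'
    have hM'0 : 0 < M' := lt_of_lt_of_le one_pos (le_max_right _ _)
    obtain ⟨n, hn⟩ := exists_pow_lt_of_lt_one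
      (show (0 : ℝ) < 1 / (M' * ‖h + 1‖) by positivity) hrlt
    refine ⟨n + 1, le_add_self, fun _ => false, ?_⟩
    have hcnt : bdryPlusCount k (n + 1) (fun _ => false) = 0 := by
      simp [bdryPlusCount]
    rw [hnorm, hcnt, pow_zero]
    set A : ℕ := k * (k ^ (n + 1) - 1) / (k - 1) with hA
    have hAge : n + 1 ≤ A := by
      have hkn : n + 1 < k ^ (n + 1) := Nat.lt_pow_self (by omega : 1 < k)
      calc n + 1 ≤ k ^ (n + 1) - 1 := by omega
        _ = (k - 1) * (k ^ (n + 1) - 1) / (k - 1) :=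
            (Nat.mul_div_cancel_left _ (by omega)).symm
        _ ≤ A := Nat.div_le_div_right (Nat.mul_le_mul_right _ (by omega))
    have hpow : r ^ A ≤ r ^ n :=
      pow_le_pow_of_le_one hr0.le hrlt.le (by omega)
    have hless : r ^ A * ‖h + 1‖ < 1 / M' := by
      have : r ^ A * ‖h + 1‖ ≤ r ^ n * ‖h + 1‖ :=
        mul_le_mul_of_nonneg_right hpow hc0.le
      have h2 : r ^ n * ‖h + 1‖ < (1 / (M' * ‖h + 1‖)) * ‖h + 1‖ :=
        mul_lt_mul_of_pos_right hn hc0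
      have h3 : (1 / (M' * ‖h + 1‖)) * ‖h + 1‖ = 1 / M' := by
        field_simp
      linarith
    have hpos : 0 < r ^ A * ‖h + 1‖ := by positivity
    rw [lt_div_iff₀ hpos]
    calc M * (r ^ A * ‖h + 1‖) ≤ M' * (r ^ A * ‖h + 1‖) :=
          mul_le_mul_of_nonneg_right (le_max_left _ _) hpos.le
      _ < M' * (1 / M') := mul_lt_mul_of_pos_left hless hM'0
      _ = 1 := by field_simp
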